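/- Let p be a prime and let D be a Ferrers diagram of order n. Then: (1) D and its adjoint D^⊤ have the same p-height; (2) (D^⊤)^(p) = (D^(p))^⊤; and (3) D is p-monotone if and only if D^⊤ is p-convex. -/

import Mathlib

/-- A Ferrers diagram of order `n`, given by its column heights
`c 0 ≤ c 1 ≤ … ≤ c (n-1) ≤ n` (so `c j` is the number of dots in the (j+1)-st column). -/
def IsFerrersDiagram (n : ℕ) (c : Fin n → ℕ) : Prop :=
  Monotone c ∧ ∀ i, c i ≤ n

/-- Extension of the column-height function to `ℕ`, by zero. -/
def colExt (n : ℕ) (c : Fin n → ℕ) : ℕ → ℕ :=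
  fun k => if h : k < n then c ⟨k, h⟩ else 0

/-- `ν_j(D,d) = Σ_{i=1}^{n-j} max{0, c_i - d + 1 + j}` (truncated subtraction gives the max). -/
def nuJ (n d j : ℕ) (c : Fin n → ℕ) : ℕ :=
  ∑ i ∈ Finset.range (n - j), (colExt n c i + 1 + j - d)

/-- `ν_min(D,d) = min{ν_j(D,d) : 0 ≤ j ≤ d-1}`. -/
noncomputable def nuMin (n d : ℕ) (c : Fin n → ℕ) : ℕ :=
  sInf {k | ∃ j < d, k = nuJ n d j c}

/-- A Ferrers diagram is monotone if `c (i+1) > c i` whenever `0 < c i < n`. -/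
def DiagMonotone (n : ℕ) (c : Fin n → ℕ) : Prop :=
  ∀ i : Fin n, ∀ hi : (i : ℕ) + 1 < n, 0 < c i → c i < n → c i < c ⟨(i : ℕ) + 1, hi⟩

/-- A Ferrers diagram is convex if `c (i+1) - c i ≤ 1` for all `i`. -/
def DiagConvex (n : ℕ) (c : Fin n → ℕ) : Prop :=
  ∀ i : Fin n, ∀ hi : (i : ℕ) + 1 < n, c ⟨(i : ℕ) + 1, hi⟩ ≤ c i + 1

/-- A Ferrers diagram is strictly monotone if `c (i+1) > c i` whenever `c i > 0`. -/
def DiagStrictlyMonotone (n : ℕ) (c : Fin n → ℕ) : Prop :=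
  ∀ i : Fin n, ∀ hi : (i : ℕ) + 1 < n, 0 < c i → c i < c ⟨(i : ℕ) + 1, hi⟩

/-- A Ferrers diagram is initially convex if `c 1 ≤ 1` and `c (i+1) - c i ≤ 1` for all `i`. -/
def DiagInitiallyConvex (n : ℕ) (c : Fin n → ℕ) : Prop :=
  (∀ h : 0 < n, c ⟨0, h⟩ ≤ 1) ∧ DiagConvex n c

/-- `h` is an admissible `p`-height for the Ferrers diagram `c`: `p^h ∣ n`, `p^h ∣ c i` for
all `i`, and `c (n-r) = c (n-s)` (1-indexed) whenever `r, s` lie in the same block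
`{Q p^h, …, (Q+1) p^h - 1}`. -/
def HeightOK (p n h : ℕ) (c : Fin n → ℕ) : Prop :=
  p ^ h ∣ n ∧ (∀ i, p ^ h ∣ c i) ∧
    ∀ r s : Fin n, (r : ℕ) / p ^ h = (s : ℕ) / p ^ h →
      c ⟨n - 1 - (r : ℕ), by have := r.isLt; omega⟩ =
        c ⟨n - 1 - (s : ℕ), by have := s.isLt; omega⟩

/-- The `p`-height of a Ferrers diagram: the largest admissible `h`. -/
noncomputable def pHeight (p n : ℕ) (c : Fin n → ℕ) : ℕ :=
  sSup {h | HeightOK p n h c}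

/-- The `p`-contraction of a Ferrers diagram: `c'_i = c_{p^h i} / p^h` (1-indexed),
a diagram of order `n / p^h`, where `h` is the `p`-height. -/
noncomputable def pContraction (p n : ℕ) (c : Fin n → ℕ) :
    Fin (n / p ^ pHeight p n c) → ℕ :=
  fun i => colExt n c (p ^ pHeight p n c * ((i : ℕ) + 1) - 1) / p ^ pHeight p n c

/-- A Ferrers diagram is `p`-monotone if its `p`-contraction is monotone. -/
def IsPMonotone (p n : ℕ) (c : Fin n → ℕ) : Prop :=
  DiagMonotone (n / p ^ pHeight p n c) (pContraction p n c)

/-- A Ferrers diagram is `p`-convex if its `p`-contraction is convex. -/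
def IsPConvex (p n : ℕ) (c : Fin n → ℕ) : Prop :=
  DiagConvex (n / p ^ pHeight p n c) (pContraction p n c)

/-- A Ferrers diagram is strictly `p`-monotone if its `p`-contraction is strictly monotone. -/
def IsStrictlyPMonotone (p n : ℕ) (c : Fin n → ℕ) : Prop :=
  DiagStrictlyMonotone (n / p ^ pHeight p n c) (pContraction p n c)

/-- A Ferrers diagram is initially `p`-convex if its `p`-contraction is initially convex. -/
def IsInitiallyPConvex (p n : ℕ) (c : Fin n → ℕ) : Prop :=
  DiagInitiallyConvex (n / p ^ pHeight p n c) (pContraction p n c)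

/-- The adjoint Ferrers diagram: column `j+1` of `D^⊤` has `#{i : c i ≥ n - j}` dots. -/
def adjointDiag (n : ℕ) (c : Fin n → ℕ) : Fin n → ℕ :=
  fun j => (Finset.univ.filter (fun i : Fin n => n - (j : ℕ) ≤ c i)).card

/-- `|D ∩ Δ_{i+1}^n|`: the number of dots of `D` on the (i+1)-st diagonal (0-indexed `i`). -/
def diagDots (n : ℕ) (c : Fin n → ℕ) (i : ℕ) : ℕ :=
  ((Finset.range n).filter (fun r => r + i < n ∧ r < colExt n c (r + i))).card

/-- The pair `(D, d)` is MDS-constructible if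
`ν_min(D,d) = Σ_{i=1}^n max{0, |D ∩ Δ_i^n| - d + 1}`. -/
def IsMDSConstructibleP (n d : ℕ) (c : Fin n → ℕ) : Prop :=
  nuMin n d c = ∑ i ∈ Finset.range n, (diagDots n c i + 1 - d)


/-- card of an interval-filter on `Fin n`. -/
lemma HC (n a b : ℕ) :
    ((Finset.univ : Finset (Fin n)).filter (fun i : Fin n => a ≤ (i:ℕ) ∧ (i:ℕ) < b)).card
      = min b n - a := by
  have h1 : ((Finset.univ : Finset (Fin n)).filter (fun i : Fin n => a ≤ (i:ℕ) ∧ (i:ℕ) < b)).card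
      = ((Finset.range n).filter (fun i => a ≤ i ∧ i < b)).card := by
    rw [Finset.card_filter, Finset.card_filter, ← Fin.sum_univ_eq_sum_range (fun k => if a ≤ k ∧ k < b then 1 else 0) n]
  rw [h1]
  have h2 : (Finset.range n).filter (fun i => a ≤ i ∧ i < b) = Finset.Ico a (min b n) := by
    ext x; simp [Finset.mem_Ico]; omega
  rw [h2, Nat.card_Ico]

lemma HC' (n a : ℕ) :
    ((Finset.univ : Finset (Fin n)).filter (fun i : Fin n => a ≤ (i:ℕ))).card = n - a := by
  have : ((Finset.univ : Finset (Fin n)).filter (fun i : Fin n => a ≤ (i:ℕ)))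
      = (Finset.univ.filter (fun i : Fin n => a ≤ (i:ℕ) ∧ (i:ℕ) < n)) := by
    apply Finset.filter_congr; intro i _; simp [i.isLt]
  rw [this, HC]; omega

/-- Galois-type lemma for monotone `c`. -/
lemma galois {n : ℕ} {c : Fin n → ℕ} (hm : Monotone c) (t : ℕ) (k : Fin n) :
    n - (k:ℕ) ≤ (Finset.univ.filter (fun i : Fin n => t ≤ c i)).card ↔ t ≤ c k := by
  constructor
  · intro h
    by_contra h'
    push_neg at h'
    have hsub : (Finset.univ.filter (fun i : Fin n => t ≤ c i))
        ⊆ Finset.univ.filter (fun i : Fin n => (k:ℕ) + 1 ≤ (i:ℕ)) := by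
      intro i hi
      simp only [Finset.mem_filter, Finset.mem_univ, true_and] at *
      by_contra hik
      push_neg at hik
      have : i ≤ k := by rw [Fin.le_def]; omega
      exact absurd (le_trans hi (hm this)) (not_le.mpr h')
    have := Finset.card_le_card hsub
    rw [HC'] at this
    have := k.isLt
    omega
  · intro h
    have hsub : Finset.univ.filter (fun i : Fin n => (k:ℕ) ≤ (i:ℕ))
        ⊆ Finset.univ.filter (fun i : Fin n => t ≤ c i) := by
      intro i hi
      simp only [Finset.mem_filter, Finset.mem_univ, true_and] at *
      exact le_trans h (hm (by rw [Fin.le_def]; omega))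
    have := Finset.card_le_card hsub
    rw [HC'] at this
    omega


lemma key2 (P N Q V b : ℕ) (hb : b < P) :
    P*N - (P*Q+b) ≤ P*V ↔ P*N - P*Q ≤ P*V := by
  rcases le_or_gt N Q with h | h
  · have := Nat.mul_le_mul_left P h; omega
  constructor
  · intro hle
    have e : P*(N-Q) = P*N - P*Q := Nat.mul_sub P N Q
    have hq : Q + 1 ≤ N := h
    have e2 : P*(Q+1) ≤ P*N := Nat.mul_le_mul_left P hq
    have e3 : P*(Q+1) = P*Q + P := by ring
    by_contra hc
    push_neg at hc
    have : P*V < P*(N-Q) := by omega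
    have hVN : V < N - Q := Nat.lt_of_mul_lt_mul_left this
    have : P*(V+1) ≤ P*(N-Q) := Nat.mul_le_mul_left P hVN
    have e4 : P*(V+1) = P*V + P := by ring
    omega
  · intro hle; omega

/-- `(N*P - 1 - a)/P = N - 1 - a/P` for `a < N*P`. -/
lemma rev_div' (P N a : ℕ) (hP : 0 < P) (ha : a < N*P) : (N*P - 1 - a)/P = N - 1 - a/P := by
  have hd := Nat.div_add_mod a P
  set Q := a / P with hQ
  set r := a % P with hr
  have hrP : r < P := Nat.mod_lt _ hP
  have hQN : Q < N := by
    have h1 : a / P < N*P/P := Nat.div_lt_div_of_lt_of_dvd ⟨N, Nat.mul_comm N P⟩ ha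
    rwa [Nat.mul_div_cancel _ hP] at h1
  have e1 : P*(N-1-Q) = P*N - P - P*Q := by
    rw [Nat.mul_sub, Nat.mul_sub, Nat.mul_one]
  have e2 : P*N = N*P := Nat.mul_comm P N
  have e3 : P*(Q+1) ≤ P*N := Nat.mul_le_mul_left P hQN
  have e4 : P*(Q+1) = P*Q + P := by ring
  have key : N*P - 1 - a = P*(N-1-Q) + (P-1-r) := by omega
  rw [key, Nat.mul_add_div hP, Nat.div_eq_of_lt (show P-1-r < P by omega)]
  omega

lemma pred_div (P x : ℕ) (hP : 0 < P) (hx : 0 < x) (hm : x % P ≠ 0) : (x-1)/P = x/P := by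
  have hd := Nat.div_add_mod x P
  have hrP : x % P < P := Nat.mod_lt _ hP
  have key : x - 1 = P*(x/P) + (x % P - 1) := by omega
  rw [key, Nat.mul_add_div hP, Nat.div_eq_of_lt (show x % P - 1 < P by omega), Nat.add_zero]

lemma idx_div (P Q : ℕ) (hP : 0 < P) : (P*(Q+1)-1)/P = Q := by
  have e : P*(Q+1) - 1 = P*Q + (P-1) := by
    have : P*(Q+1) = P*Q + P := by ring
    omega
  rw [e, Nat.mul_add_div hP, Nat.div_eq_of_lt (show P-1 < P by omega), Nat.add_zero]

lemma div_eq_iff' (P Q x : ℕ) (hP : 0 < P) : x / P = Q ↔ P*Q ≤ x ∧ x < P*Q + P := by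
  constructor
  · rintro rfl
    have h1 := Nat.div_add_mod x P
    have := Nat.mod_lt x hP
    omega
  · rintro ⟨h1, h2⟩
    have hd := Nat.div_add_mod x P
    have := Nat.mod_lt x hP
    have h3 : P*(x/P) ≤ x := by omega
    -- x/P = Q by squeeze
    rcases Nat.lt_trichotomy (x/P) Q with h | h | h
    · have : x/P + 1 ≤ Q := h
      have := Nat.mul_le_mul_left P this
      have e : P*(x/P+1) = P*(x/P) + P := by ring
      omega
    · exact h
    · have : Q + 1 ≤ x/P := h
      have := Nat.mul_le_mul_left P this
      have e : P*(Q+1) = P*Q + P := by ring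
      omega

/-- membership threshold depends only on block, for multiples of `P`. -/
lemma le_iff_block (P n v j : ℕ) (hP : 0 < P) (hn : P ∣ n) (hv : P ∣ v) :
    n - j ≤ v ↔ n - P*(j/P) ≤ v := by
  obtain ⟨N, rfl⟩ := hn
  obtain ⟨V, rfl⟩ := hv
  have hd := Nat.div_add_mod j P
  have hb : j % P < P := Nat.mod_lt _ hP
  have := key2 P N (j/P) V (j % P) hb
  omega


section Helpers

lemma rev_blocks_iff {P n : ℕ} (hP : 0 < P) (hdvd : P ∣ n) (c : Fin n → ℕ) :
    (∀ r s : Fin n, (r : ℕ) / P = (s : ℕ) / P →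
      c ⟨n - 1 - (r : ℕ), by have := r.isLt; omega⟩ =
        c ⟨n - 1 - (s : ℕ), by have := s.isLt; omega⟩) ↔
    (∀ i j : Fin n, (i:ℕ)/P = (j:ℕ)/P → c i = c j) := by
  obtain ⟨N, hN⟩ := hdvd
  have hn' : n = N * P := by rw [hN, Nat.mul_comm]
  have hrev : ∀ a : ℕ, a < n → (n - 1 - a) / P = N - 1 - a / P := by
    intro a ha
    rw [hn']
    exact rev_div' P N a hP (by omega)
  constructor
  · intro H i j hij
    have hi := i.isLt
    have hj := j.isLt
    have h1 : c ⟨n - 1 - (n - 1 - (i:ℕ)), by omega⟩ = c ⟨n - 1 - (n - 1 - (j:ℕ)), by omega⟩ :=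
      H ⟨n - 1 - (i:ℕ), by omega⟩ ⟨n - 1 - (j:ℕ), by omega⟩
      (by
        show (n - 1 - (i:ℕ)) / P = (n - 1 - (j:ℕ)) / P
        rw [hrev _ i.isLt, hrev _ j.isLt, hij])
    have e1 : c ⟨n - 1 - (n - 1 - (i:ℕ)), by omega⟩ = c i := by
      congr 1
      exact Fin.ext (by simp; omega)
    have e2 : c ⟨n - 1 - (n - 1 - (j:ℕ)), by omega⟩ = c j := by
      congr 1
      exact Fin.ext (by simp; omega)
    rw [e1, e2] at h1
    exact h1
  · intro H r s hrs
    have hn1 : 0 < n := by have := r.isLt; omega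
    exact H ⟨n - 1 - (r:ℕ), by omega⟩ ⟨n - 1 - (s:ℕ), by omega⟩
      (by
        show (n - 1 - (r:ℕ)) / P = (n - 1 - (s:ℕ)) / P
        rw [hrev _ (by omega), hrev _ (by omega), hrs])

lemma adjoint_mono (n : ℕ) (c : Fin n → ℕ) : Monotone (adjointDiag n c) := by
  intro j j' hjj
  apply Finset.card_le_card
  intro i hi
  simp only [Finset.mem_filter, Finset.mem_univ, true_and] at *
  have : (j:ℕ) ≤ (j':ℕ) := hjj
  omega

lemma adjoint_le (n : ℕ) (c : Fin n → ℕ) (j : Fin n) : adjointDiag n c j ≤ n := by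
  have h := Finset.card_filter_le (Finset.univ : Finset (Fin n)) (fun i : Fin n => n - (j:ℕ) ≤ c i)
  rw [Finset.card_univ, Fintype.card_fin] at h
  exact h

lemma adjoint_ferrers (n : ℕ) (c : Fin n → ℕ) : IsFerrersDiagram n (adjointDiag n c) :=
  ⟨adjoint_mono n c, adjoint_le n c⟩

lemma adjoint_adjoint {n : ℕ} {c : Fin n → ℕ} (hferr : IsFerrersDiagram n c) :
    adjointDiag n (adjointDiag n c) = c := by
  funext k
  have hck := hferr.2 k
  have e : (Finset.univ.filter (fun j : Fin n => n - (k:ℕ) ≤ adjointDiag n c j))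
      = Finset.univ.filter (fun j : Fin n => n - c k ≤ (j:ℕ)) := by
    apply Finset.filter_congr
    intro j _
    have h1 : (n - (k:ℕ) ≤ adjointDiag n c j) ↔ n - (j:ℕ) ≤ c k := galois hferr.1 _ k
    have hjn := j.isLt
    rw [h1]
    omega
  show (Finset.univ.filter (fun j : Fin n => n - (k:ℕ) ≤ adjointDiag n c j)).card = c k
  rw [e, HC']
  omega

lemma heightOK_fwd {p n h : ℕ} {c : Fin n → ℕ} (H : HeightOK p n h c) (hP : 0 < p^h) :
    ∀ i j : Fin n, (i:ℕ)/p^h = (j:ℕ)/p^h → c i = c j :=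
  (rev_blocks_iff hP H.1 c).mp H.2.2

lemma heightOK_of_fwd {p n h : ℕ} {c : Fin n → ℕ} (h1 : p^h ∣ n) (h2 : ∀ i, p^h ∣ c i)
    (hP : 0 < p^h)
    (h3 : ∀ i j : Fin n, (i:ℕ)/p^h = (j:ℕ)/p^h → c i = c j) : HeightOK p n h c :=
  ⟨h1, h2, (rev_blocks_iff hP h1 c).mpr h3⟩

lemma adjoint_dvd {n P : ℕ} {c : Fin n → ℕ} (hferr : IsFerrersDiagram n c) (hP : 0 < P)
    (hdvd : P ∣ n) (hfwd : ∀ i j : Fin n, (i:ℕ)/P = (j:ℕ)/P → c i = c j) (j : Fin n) :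
    P ∣ adjointDiag n c j := by
  have hcard : (Finset.univ.filter (fun i : Fin n => n - (j:ℕ) ≤ c i)).card
      = adjointDiag n c j := rfl
  have hkn : adjointDiag n c j ≤ n := adjoint_le n c j
  rcases Nat.eq_zero_or_pos (adjointDiag n c j) with h0 | h0
  · simp [h0]
  rcases Nat.lt_or_ge (adjointDiag n c j) n with hlt | hge
  · -- k < n
    have hm : n - (j:ℕ) ≤ c ⟨n - adjointDiag n c j, by omega⟩ := by
      apply (galois hferr.1 (n - (j:ℕ)) ⟨n - adjointDiag n c j, by omega⟩).mp
      rw [hcard]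
      show n - (n - adjointDiag n c j) ≤ adjointDiag n c j
      omega
    suffices hdk : P ∣ (n - adjointDiag n c j) by
      have h2 := Nat.dvd_sub hdvd hdk
      have e : n - (n - adjointDiag n c j) = adjointDiag n c j := by omega
      rwa [e] at h2
    by_contra hndvd
    have hmod : (n - adjointDiag n c j) % P ≠ 0 := fun h => hndvd (Nat.dvd_of_mod_eq_zero h)
    have hpred : (n - adjointDiag n c j - 1)/P = (n - adjointDiag n c j)/P :=
      pred_div P _ hP (by omega) hmod
    have hle : n - (j:ℕ) ≤ c ⟨n - adjointDiag n c j - 1, by omega⟩ := by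
      have heq : c ⟨n - adjointDiag n c j - 1, by omega⟩ = c ⟨n - adjointDiag n c j, by omega⟩ :=
        hfwd _ _ (by
          show (n - adjointDiag n c j - 1)/P = (n - adjointDiag n c j)/P
          exact hpred)
      rw [heq]
      exact hm
    have hnot := (galois hferr.1 (n - (j:ℕ)) ⟨n - adjointDiag n c j - 1, by omega⟩).mpr hle
    have hfin : n - (n - adjointDiag n c j - 1) ≤ adjointDiag n c j :=
      le_trans hnot (le_of_eq hcard)
    omega
  · have : adjointDiag n c j = n := by omega
    rw [this]
    exact hdvd

lemma adjoint_fwdconst {n P : ℕ} {c : Fin n → ℕ} (hP : 0 < P) (hdvd : P ∣ n)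
    (hcd : ∀ i, P ∣ c i) : ∀ j j' : Fin n, (j:ℕ)/P = (j':ℕ)/P →
      adjointDiag n c j = adjointDiag n c j' := by
  intro j j' hjj
  show (Finset.univ.filter (fun i : Fin n => n - (j:ℕ) ≤ c i)).card
      = (Finset.univ.filter (fun i : Fin n => n - (j':ℕ) ≤ c i)).card
  congr 1
  apply Finset.filter_congr
  intro i _
  have h1 := le_iff_block P n (c i) (j:ℕ) hP hdvd (hcd i)
  have h2 := le_iff_block P n (c i) (j':ℕ) hP hdvd (hcd i)
  rw [hjj] at h1
  exact h1.trans h2.symm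

lemma heightOK_adjoint {p n h : ℕ} {c : Fin n → ℕ} (hp : 0 < p)
    (hferr : IsFerrersDiagram n c) (H : HeightOK p n h c) :
    HeightOK p n h (adjointDiag n c) := by
  have hP : 0 < p^h := pow_pos hp h
  exact heightOK_of_fwd H.1 (fun j => adjoint_dvd hferr hP H.1 (heightOK_fwd H hP) j) hP
    (adjoint_fwdconst hP H.1 H.2.1)

lemma heightOK_zero (p n : ℕ) (c : Fin n → ℕ) : HeightOK p n 0 c := by
  refine ⟨by simp, fun i => by simp, ?_⟩
  intro r s hrs
  have : r = s := Fin.ext (by simpa using hrs)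
  subst this
  rfl

lemma heightOK_bdd {p n : ℕ} (hp : 1 < p) (hn : 1 ≤ n) (c : Fin n → ℕ) :
    BddAbove {h | HeightOK p n h c} := by
  refine ⟨n, fun h hh => ?_⟩
  have h1 : p^h ≤ n := Nat.le_of_dvd hn hh.1
  have h2 : h < p^h := Nat.lt_pow_self hp
  omega

lemma heightOK_pHeight {p n : ℕ} (hp : 1 < p) (hn : 1 ≤ n) (c : Fin n → ℕ) :
    HeightOK p n (pHeight p n c) c :=
  Nat.sSup_mem ⟨0, heightOK_zero p n c⟩ (heightOK_bdd hp hn c)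

lemma pHeight_adjoint {p n : ℕ} (hp : p.Prime) {c : Fin n → ℕ}
    (hferr : IsFerrersDiagram n c) :
    pHeight p n (adjointDiag n c) = pHeight p n c := by
  unfold pHeight
  congr 1
  ext h
  simp only [Set.mem_setOf_eq]
  constructor
  · intro H
    have h2 := heightOK_adjoint hp.pos (adjoint_ferrers n c) H
    rwa [adjoint_adjoint hferr] at h2
  · exact heightOK_adjoint hp.pos hferr

lemma idx_bound {P n : ℕ} (hP : 0 < P) (hdvd : P ∣ n) {Q : ℕ} (hQ : Q < n/P) :
    P*(Q+1)-1 < n := by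
  have h1 : Q + 1 ≤ n / P := hQ
  have h2 : P*(Q+1) ≤ P*(n/P) := Nat.mul_le_mul_left P h1
  rw [Nat.mul_div_cancel' hdvd] at h2
  have h3 : 1 ≤ P*(Q+1) := Nat.mul_pos hP (by omega)
  omega

lemma card_block_filter {n P : ℕ} {c : Fin n → ℕ} (hP : 0 < P) (hdvd : P ∣ n)
    (hfwd : ∀ i j : Fin n, (i:ℕ)/P = (j:ℕ)/P → c i = c j) (t : ℕ) :
    (Finset.univ.filter (fun i : Fin n => t ≤ c i)).card
      = P * (Finset.univ.filter
          (fun Q : Fin (n/P) => t ≤ colExt n c (P*((Q:ℕ)+1)-1))).card := by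
  have hf : ∀ i : Fin n, (i:ℕ)/P < n/P := fun i => Nat.div_lt_div_of_lt_of_dvd hdvd i.isLt
  have hrepval : ∀ i : Fin n, colExt n c (P*((i:ℕ)/P+1)-1) = c i := by
    intro i
    have hlt : P*((i:ℕ)/P+1)-1 < n := idx_bound hP hdvd (hf i)
    unfold colExt
    rw [dif_pos hlt]
    exact hfwd ⟨P*((i:ℕ)/P+1)-1, hlt⟩ i (by
      show (P*((i:ℕ)/P+1)-1)/P = (i:ℕ)/P
      exact idx_div P _ hP)
  have hmem : ∀ x ∈ (Finset.univ.filter (fun i : Fin n => t ≤ c i)),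
      (⟨(x:ℕ)/P, hf x⟩ : Fin (n/P)) ∈ (Finset.univ.filter
        (fun Q : Fin (n/P) => t ≤ colExt n c (P*((Q:ℕ)+1)-1))) := by
    intro x hx
    simp only [Finset.mem_filter, Finset.mem_univ, true_and] at *
    show t ≤ colExt n c (P*((x:ℕ)/P+1)-1)
    rw [hrepval x]
    exact hx
  rw [Finset.card_eq_sum_card_fiberwise hmem]
  have hfiber : ∀ Q ∈ (Finset.univ.filter
      (fun Q : Fin (n/P) => t ≤ colExt n c (P*((Q:ℕ)+1)-1))),
      ((Finset.univ.filter (fun i : Fin n => t ≤ c i)).filter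
        (fun i : Fin n => (⟨(i:ℕ)/P, hf i⟩ : Fin (n/P)) = Q)).card = P := by
    intro Q hQmem
    simp only [Finset.mem_filter, Finset.mem_univ, true_and] at hQmem
    have heq : ((Finset.univ.filter (fun i : Fin n => t ≤ c i)).filter
        (fun i : Fin n => (⟨(i:ℕ)/P, hf i⟩ : Fin (n/P)) = Q))
        = Finset.univ.filter (fun i : Fin n => P*(Q:ℕ) ≤ (i:ℕ) ∧ (i:ℕ) < P*(Q:ℕ)+P) := by
      ext i
      simp only [Finset.mem_filter, Finset.mem_univ, true_and]
      constructor
      · rintro ⟨hti, hfi⟩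
        have hval : (i:ℕ)/P = (Q:ℕ) := congrArg Fin.val hfi
        exact (div_eq_iff' P (Q:ℕ) (i:ℕ) hP).mp hval
      · intro hiv
        have hval : (i:ℕ)/P = (Q:ℕ) := (div_eq_iff' P (Q:ℕ) (i:ℕ) hP).mpr hiv
        refine ⟨?_, Fin.ext hval⟩
        have h5 := hrepval i
        rw [hval] at h5
        omega
    rw [heq, HC]
    have h2 : P*((Q:ℕ)+1)-1 < n := idx_bound hP hdvd Q.isLt
    have h3 : P*((Q:ℕ)+1) = P*(Q:ℕ)+P := by ring
    omega
  rw [Finset.sum_congr rfl hfiber, Finset.sum_const, smul_eq_mul, Nat.mul_comm]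

lemma colExt_lt {n : ℕ} (c : Fin n → ℕ) (x : ℕ) (hx : x < n) :
    colExt n c x = c ⟨x, hx⟩ := by
  unfold colExt
  rw [dif_pos hx]

lemma part2lemma {p n : ℕ} (hp : p.Prime) (hn : 1 ≤ n) (c : Fin n → ℕ)
    (hferr : IsFerrersDiagram n c) (k : ℕ) (h2 : k < n / p ^ pHeight p n c) :
    colExt n (adjointDiag n c) (p ^ pHeight p n c * (k + 1) - 1) / p ^ pHeight p n c
      = adjointDiag (n / p ^ pHeight p n c) (pContraction p n c) ⟨k, h2⟩ := by
  have H := heightOK_pHeight hp.one_lt hn c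
  set P := p ^ pHeight p n c with hPdef
  have hP : 0 < P := pow_pos hp.pos _
  have hdvd : P ∣ n := H.1
  have hcd : ∀ i, P ∣ c i := H.2.1
  have hfwd := heightOK_fwd H hP
  have hj0 : P*(k+1)-1 < n := idx_bound hP hdvd h2
  rw [colExt_lt (adjointDiag n c) _ hj0]
  -- LHS is adjointDiag at index P*(k+1)-1
  have lhs1 : adjointDiag n c ⟨P*(k+1)-1, hj0⟩
      = (Finset.univ.filter (fun i : Fin n => n - (P*(k+1)-1) ≤ c i)).card := rfl
  have lhs2 : (Finset.univ.filter (fun i : Fin n => n - (P*(k+1)-1) ≤ c i))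
      = Finset.univ.filter (fun i : Fin n => n - P*k ≤ c i) := by
    apply Finset.filter_congr
    intro i _
    have h3 := le_iff_block P n (c i) (P*(k+1)-1) hP hdvd (hcd i)
    rw [idx_div P k hP] at h3
    exact h3
  have lhs3 := card_block_filter hP hdvd hfwd (n - P*k)
  have rhs1 : adjointDiag (n / P) (pContraction p n c) ⟨k, h2⟩
      = (Finset.univ.filter (fun Q : Fin (n/P) => n/P - k ≤ pContraction p n c Q)).card := rfl
  have rhs2 : (Finset.univ.filter (fun Q : Fin (n/P) => n/P - k ≤ pContraction p n c Q))
      = Finset.univ.filter (fun Q : Fin (n/P) => n - P*k ≤ colExt n c (P*((Q:ℕ)+1)-1)) := by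
    apply Finset.filter_congr
    intro Q _
    have e1 : pContraction p n c Q = colExt n c (P*((Q:ℕ)+1)-1) / P := rfl
    rw [e1, Nat.le_div_iff_mul_le hP]
    have e2 : (n/P - k)*P = n - P*k := by
      rw [Nat.sub_mul, Nat.div_mul_cancel hdvd, Nat.mul_comm]
    rw [e2]
  rw [lhs1, lhs2, lhs3, rhs1, rhs2, Nat.mul_div_cancel_left _ hP]

lemma contraction_ferrers {p n : ℕ} (hp : 0 < p) (hn : 1 ≤ n) (c : Fin n → ℕ)
    (hferr : IsFerrersDiagram n c) (hdvd : p ^ pHeight p n c ∣ n) :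
    IsFerrersDiagram (n / p ^ pHeight p n c) (pContraction p n c) := by
  set P := p ^ pHeight p n c with hPdef
  have hP : 0 < P := pow_pos hp _
  constructor
  · intro Q Q' hQQ
    show colExt n c (P*((Q:ℕ)+1)-1) / P ≤ colExt n c (P*((Q':ℕ)+1)-1) / P
    apply Nat.div_le_div_right
    have hi1 : P*((Q:ℕ)+1)-1 < n := idx_bound hP hdvd Q.isLt
    have hi2 : P*((Q':ℕ)+1)-1 < n := idx_bound hP hdvd Q'.isLt
    rw [colExt_lt c _ hi1, colExt_lt c _ hi2]
    apply hferr.1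
    rw [Fin.le_def]
    have hv : (Q:ℕ) ≤ (Q':ℕ) := hQQ
    have := Nat.mul_le_mul_left P (show (Q:ℕ)+1 ≤ (Q':ℕ)+1 by omega)
    show P*((Q:ℕ)+1)-1 ≤ P*((Q':ℕ)+1)-1
    omega
  · intro Q
    show colExt n c (P*((Q:ℕ)+1)-1) / P ≤ n / P
    apply Nat.div_le_div_right
    have hi1 : P*((Q:ℕ)+1)-1 < n := idx_bound hP hdvd Q.isLt
    rw [colExt_lt c _ hi1]
    exact hferr.2 _

lemma split_card {m : ℕ} (d : Fin m → ℕ) (v : ℕ) :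
    (Finset.univ.filter (fun i : Fin m => v ≤ d i)).card
      = (Finset.univ.filter (fun i : Fin m => v+1 ≤ d i)).card
        + (Finset.univ.filter (fun i : Fin m => d i = v)).card := by
  rw [← Finset.card_union_of_disjoint (by
    rw [Finset.disjoint_left]
    intro a ha hb
    simp only [Finset.mem_filter, Finset.mem_univ, true_and] at ha hb
    omega)]
  congr 1
  rw [← Finset.filter_or]
  apply Finset.filter_congr
  intro i _
  omega

lemma fib_mono {m : ℕ} {d : Fin m → ℕ} (hmono : Monotone d) :
    DiagMonotone m d ↔
      ∀ v, 0 < v → v < m → (Finset.univ.filter (fun i : Fin m => d i = v)).card ≤ 1 := by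
  constructor
  · intro H v hv hvm
    by_contra hc
    push_neg at hc
    obtain ⟨i₁, h1, i₂, h2, hne⟩ := Finset.one_lt_card.mp hc
    simp only [Finset.mem_filter, Finset.mem_univ, true_and] at h1 h2
    have claim : ∀ x y : Fin m, x < y → d x = v → d y = v → False := by
      intro x y hxy hdx hdy
      have hxy' : (x:ℕ) < (y:ℕ) := hxy
      have hylt := y.isLt
      have hx1 : (x:ℕ)+1 < m := by omega
      have hmlt := H x hx1 (by omega) (by omega)
      have h3 : d ⟨(x:ℕ)+1, hx1⟩ ≤ d y := hmono (by
        rw [Fin.le_def]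
        show (x:ℕ)+1 ≤ (y:ℕ)
        omega)
      omega
    rcases hne.lt_or_gt with h | h
    · exact claim i₁ i₂ h h1 h2
    · exact claim i₂ i₁ h h2 h1
  · intro H i hi h0 hm'
    have hle : d i ≤ d ⟨(i:ℕ)+1, hi⟩ := hmono (by
      rw [Fin.le_def]
      exact Nat.le_succ _)
    rcases eq_or_lt_of_le hle with he | hlt
    · exfalso
      have hcard := H (d i) h0 hm'
      rw [Finset.card_le_one] at hcard
      have hmem1 : i ∈ Finset.univ.filter (fun x : Fin m => d x = d i) := by simp
      have hmem2 : (⟨(i:ℕ)+1, hi⟩ : Fin m) ∈ Finset.univ.filter (fun x : Fin m => d x = d i) := by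
        simp [← he]
      have := hcard i hmem1 ⟨(i:ℕ)+1, hi⟩ hmem2
      have hval := congrArg Fin.val this
      simp at hval
    · exact hlt

lemma fib_conv {m : ℕ} (d : Fin m → ℕ) :
    DiagConvex m (adjointDiag m d) ↔
      ∀ v, 0 < v → v < m → (Finset.univ.filter (fun i : Fin m => d i = v)).card ≤ 1 := by
  have key : ∀ (j : ℕ) (hj1 : j + 1 < m) (hj : j < m),
      adjointDiag m d ⟨j+1, hj1⟩
        = adjointDiag m d ⟨j, hj⟩
          + (Finset.univ.filter (fun i : Fin m => d i = m - j - 1)).card := by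
    intro j hj1 hj
    have e1 : adjointDiag m d ⟨j+1, hj1⟩
        = (Finset.univ.filter (fun i : Fin m => m - (j+1) ≤ d i)).card := rfl
    have e2 : adjointDiag m d ⟨j, hj⟩
        = (Finset.univ.filter (fun i : Fin m => m - j ≤ d i)).card := rfl
    have f1 : (Finset.univ.filter (fun i : Fin m => m - (j+1) + 1 ≤ d i))
        = (Finset.univ.filter (fun i : Fin m => m - j ≤ d i)) :=
      Finset.filter_congr (fun i _ => by omega)
    have f2 : (Finset.univ.filter (fun i : Fin m => d i = m - (j+1)))
        = (Finset.univ.filter (fun i : Fin m => d i = m - j - 1)) :=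
      Finset.filter_congr (fun i _ => by omega)
    rw [e1, e2, split_card d (m - (j+1)), f1, f2]
  constructor
  · intro H v hv hvm
    have hj : m - 1 - v < m := by omega
    have hj1 : (m - 1 - v) + 1 < m := by omega
    have eqk := key (m - 1 - v) hj1 hj
    have hconv : adjointDiag m d ⟨(m-1-v)+1, hj1⟩ ≤ adjointDiag m d ⟨m-1-v, hj⟩ + 1 :=
      H ⟨m-1-v, hj⟩ hj1
    have hvv : m - (m-1-v) - 1 = v := by omega
    rw [hvv] at eqk
    omega
  · intro H i hi
    have eqk := key (i:ℕ) hi i.isLt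
    rw [Fin.eta] at eqk
    have hE := H (m - (i:ℕ) - 1) (by omega) (by omega)
    omega

lemma mono_iff_adj_convex {m : ℕ} {d : Fin m → ℕ} (hferr : IsFerrersDiagram m d) :
    DiagMonotone m d ↔ DiagConvex m (adjointDiag m d) := by
  rw [fib_mono hferr.1, fib_conv]

lemma diagConvex_congr {m m' : ℕ} (h : m = m') (d : Fin m → ℕ) (d' : Fin m' → ℕ)
    (hd : ∀ k (h1 : k < m) (h2 : k < m'), d ⟨k, h1⟩ = d' ⟨k, h2⟩) :
    DiagConvex m d ↔ DiagConvex m' d' := by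
  subst h
  have hdd : ∀ i : Fin m, d i = d' i := by
    intro i
    have h3 := hd i.1 i.2 i.2
    simpa [Fin.eta] using h3
  unfold DiagConvex
  constructor <;> intro H i hi
  · rw [← hdd, ← hdd]
    exact H i hi
  · rw [hdd, hdd]
    exact H i hi

end Helpers


/-- for a prime `p` and a Ferrers diagram `D` of order `n`:
(1) `D` and `D^⊤` have the same `p`-height; (2) `(D^⊤)^(p) = (D^(p))^⊤`;
(3) `D` is `p`-monotone iff `D^⊤` is `p`-convex`. -/
theorem statement9 {p n : ℕ} (hp : p.Prime) (hn : 1 ≤ n)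
    (c : Fin n → ℕ) (hferr : IsFerrersDiagram n c) :
    pHeight p n (adjointDiag n c) = pHeight p n c ∧
    (∀ (k : ℕ) (h1 : k < n / p ^ pHeight p n (adjointDiag n c))
        (h2 : k < n / p ^ pHeight p n c),
      pContraction p n (adjointDiag n c) ⟨k, h1⟩ =
        adjointDiag (n / p ^ pHeight p n c) (pContraction p n c) ⟨k, h2⟩) ∧
    (IsPMonotone p n c ↔ IsPConvex p n (adjointDiag n c)) := by
  
  have e : pHeight p n (adjointDiag n c) = pHeight p n c := pHeight_adjoint hp hferr
  have H : HeightOK p n (pHeight p n c) c := heightOK_pHeight hp.one_lt hn c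
  have part2 : ∀ (k : ℕ) (h1 : k < n / p ^ pHeight p n (adjointDiag n c))
      (h2 : k < n / p ^ pHeight p n c),
      pContraction p n (adjointDiag n c) ⟨k, h1⟩ =
        adjointDiag (n / p ^ pHeight p n c) (pContraction p n c) ⟨k, h2⟩ := by
    intro k h1 h2
    have lhs0 : pContraction p n (adjointDiag n c) ⟨k, h1⟩
        = colExt n (adjointDiag n c) (p ^ pHeight p n (adjointDiag n c) * (k + 1) - 1)
            / p ^ pHeight p n (adjointDiag n c) := rfl
    rw [lhs0, e]
    exact part2lemma hp hn c hferr k h2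
  refine ⟨e, part2, ?_⟩
  have hferr' : IsFerrersDiagram (n / p ^ pHeight p n c) (pContraction p n c) :=
    contraction_ferrers hp.pos hn c hferr H.1
  have main := mono_iff_adj_convex hferr'
  unfold IsPMonotone IsPConvex
  rw [main]
  exact diagConvex_congr (by rw [e]) _ _ (fun k h2 h1 => (part2 k h1 h2).symm)
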